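/- For any continuous strictly increasing convex function L : [0,1] → [0,1] with L(0)=0, L(1)=1, one iteration of the Lorenz operator satisfies x² ≤ L₁(x) ≤ x for all x ∈ [0,1], where L₁(x) = (∫₀ˣ L⁻¹(u) du)/(∫₀¹ L⁻¹(u) du). -/

import Mathlib

theorem one_lorenz_iteration_bounds
    (L Linv : ℝ → ℝ)
    (hcont : ContinuousOn L (Set.Icc 0 1))
    (hmono : StrictMonoOn L (Set.Icc 0 1))
    (hconv : ConvexOn ℝ (Set.Icc 0 1) L)
    (hmaps : Set.MapsTo L (Set.Icc 0 1) (Set.Icc 0 1))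
    (h0 : L 0 = 0) (h1 : L 1 = 1)
    (hinvmaps : Set.MapsTo Linv (Set.Icc 0 1) (Set.Icc 0 1))
    (hleft : ∀ x ∈ Set.Icc (0:ℝ) 1, Linv (L x) = x)
    (hright : ∀ x ∈ Set.Icc (0:ℝ) 1, L (Linv x) = x) :
    ∀ x ∈ Set.Icc (0:ℝ) 1,
      x ^ 2 ≤ (∫ u in (0:ℝ)..x, Linv u) / (∫ u in (0:ℝ)..1, Linv u) ∧
      (∫ u in (0:ℝ)..x, Linv u) / (∫ u in (0:ℝ)..1, Linv u) ≤ x := by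
  have h01 : (0:ℝ) ∈ Set.Icc (0:ℝ) 1 := ⟨le_refl _, zero_le_one⟩
  have h11 : (1:ℝ) ∈ Set.Icc (0:ℝ) 1 := ⟨zero_le_one, le_refl _⟩
  have hinv0 : Linv 0 = 0 := by have := hleft 0 h01; rwa [h0] at this
  -- L y ≤ y on [0,1] by convexity
  have hLle : ∀ y ∈ Set.Icc (0:ℝ) 1, L y ≤ y := by
    intro y hy
    have := hconv.2 h11 h01 (show (0:ℝ) ≤ y from hy.1)
      (show (0:ℝ) ≤ 1 - y from by linarith [hy.2]) (show y + (1 - y) = 1 from by ring)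
    simpa [h0, h1, smul_eq_mul] using this
  -- u ≤ Linv u on [0,1]
  have hinv_ge : ∀ u ∈ Set.Icc (0:ℝ) 1, u ≤ Linv u := by
    intro u hu
    have := hLle (Linv u) (hinvmaps hu)
    rwa [hright u hu] at this
  -- Linv is monotone on [0,1]
  have hinv_mono : MonotoneOn Linv (Set.Icc 0 1) := by
    intro u hu v hv huv
    by_contra h
    push_neg at h
    have := hmono (hinvmaps hv) (hinvmaps hu) h
    rw [hright u hu, hright v hv] at this
    linarith
  -- key concavity-type inequality: x * Linv v ≤ Linv (x * v)
  have hkey : ∀ x ∈ Set.Icc (0:ℝ) 1, ∀ v ∈ Set.Icc (0:ℝ) 1,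
      x * Linv v ≤ Linv (x * v) := by
    intro x hx v hv
    have hLv := hinvmaps hv
    have hxLv : x * Linv v ∈ Set.Icc (0:ℝ) 1 := by
      constructor
      · exact mul_nonneg hx.1 hLv.1
      · calc x * Linv v ≤ 1 * 1 := mul_le_mul hx.2 hLv.2 hLv.1 zero_le_one
          _ = 1 := by norm_num
    have hxv : x * v ∈ Set.Icc (0:ℝ) 1 := by
      constructor
      · exact mul_nonneg hx.1 hv.1
      · calc x * v ≤ 1 * 1 := mul_le_mul hx.2 hv.2 hv.1 zero_le_one
          _ = 1 := by norm_num
    have hc := hconv.2 hLv h01 (show (0:ℝ) ≤ x from hx.1)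
      (show (0:ℝ) ≤ 1 - x from by linarith [hx.2]) (show x + (1 - x) = 1 from by ring)
    simp only [smul_eq_mul, mul_zero, add_zero, h0, hright v hv] at hc
    -- hc : L (x * Linv v) ≤ x * v
    have := hinv_mono (hmaps hxLv) hxv hc
    rwa [hleft _ hxLv] at this
  -- integrability
  have hint : ∀ a b : ℝ, 0 ≤ a → b ≤ 1 → a ≤ b → IntervalIntegrable Linv
      MeasureTheory.volume a b := by
    intro a b ha hb hab
    apply MonotoneOn.intervalIntegrable
    apply hinv_mono.mono
    rw [Set.uIcc_of_le hab]
    exact Set.Icc_subset_Icc ha hb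
  set I : ℝ := ∫ u in (0:ℝ)..1, Linv u with hI
  have hIge : (1:ℝ)/2 ≤ I := by
    have : ∫ u in (0:ℝ)..1, u ≤ I := by
      apply intervalIntegral.integral_mono_on zero_le_one
        intervalIntegral.intervalIntegrable_id (hint 0 1 le_rfl le_rfl zero_le_one)
      intro u hu; exact hinv_ge u hu
    rwa [integral_id, show ((1:ℝ)^2 - 0^2)/2 = 1/2 by norm_num] at this
  have hIpos : 0 < I := lt_of_lt_of_le (by norm_num) hIge
  intro x hx
  set F : ℝ := ∫ u in (0:ℝ)..x, Linv u with hF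
  have hFA : IntervalIntegrable Linv MeasureTheory.volume 0 x := hint 0 x le_rfl hx.2 hx.1
  have hFB : IntervalIntegrable Linv MeasureTheory.volume x 1 := hint x 1 hx.1 le_rfl hx.2
  -- F ≤ x * Linv x
  have hA : F ≤ x * Linv x := by
    have : F ≤ ∫ _ in (0:ℝ)..x, Linv x := by
      apply intervalIntegral.integral_mono_on hx.1 hFA intervalIntegrable_const
      intro u hu
      exact hinv_mono ⟨hu.1, le_trans hu.2 hx.2⟩ hx hu.2
    simpa using this
  -- (1-x) * Linv x ≤ ∫ₓ¹ Linv
  have hB : (1 - x) * Linv x ≤ ∫ u in x..(1:ℝ), Linv u := by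
    have : (∫ _ in x..(1:ℝ), Linv x) ≤ ∫ u in x..(1:ℝ), Linv u := by
      apply intervalIntegral.integral_mono_on hx.2 intervalIntegrable_const hFB
      intro u hu
      exact hinv_mono hx ⟨le_trans hx.1 hu.1, hu.2⟩ hu.1
    simpa [mul_comm] using this
  have hsplit : F + (∫ u in x..(1:ℝ), Linv u) = I :=
    intervalIntegral.integral_add_adjacent_intervals hFA hFB
  have hFnonneg : 0 ≤ F := by
    apply intervalIntegral.integral_nonneg hx.1
    intro u hu
    exact le_trans hu.1 (hinv_ge u ⟨hu.1, le_trans hu.2 hx.2⟩)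
  -- upper bound: F ≤ x * I
  have hupper : F ≤ x * I := by
    have hLxnn : 0 ≤ Linv x := (hinvmaps hx).1
    nlinarith [mul_le_mul_of_nonneg_left hB hx.1, mul_le_mul_of_nonneg_left hA
      (sub_nonneg.2 hx.2)]
  -- lower bound: x^2 * I ≤ F
  have hlower : x ^ 2 * I ≤ F := by
    rcases eq_or_lt_of_le hx.1 with hx0 | hx0
    · simp only [← hx0]
      simpa using hFnonneg
    · have hxne : x ≠ 0 := ne_of_gt hx0
      have hcomp : (∫ v in (0:ℝ)..1, Linv (x * v)) = x⁻¹ * F := by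
        rw [intervalIntegral.integral_comp_mul_left Linv hxne]
        simp [smul_eq_mul, hF]
      have hgmono : MonotoneOn (fun v => Linv (x * v)) (Set.uIcc (0:ℝ) 1) := by
        rw [Set.uIcc_of_le zero_le_one]
        intro u hu v hv huv
        have hxu : x * u ∈ Set.Icc (0:ℝ) 1 := ⟨mul_nonneg hx.1 hu.1,
          by nlinarith [hx.2, hu.2, hu.1]⟩
        have hxv : x * v ∈ Set.Icc (0:ℝ) 1 := ⟨mul_nonneg hx.1 hv.1,
          by nlinarith [hx.2, hv.2, hv.1]⟩
        exact hinv_mono hxu hxv (by nlinarith)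
      have hmonotone : (∫ v in (0:ℝ)..1, x * Linv v) ≤ ∫ v in (0:ℝ)..1, Linv (x * v) := by
        apply intervalIntegral.integral_mono_on zero_le_one
          ((hint 0 1 le_rfl le_rfl zero_le_one).const_mul x)
          hgmono.intervalIntegrable
        intro v hv
        exact hkey x hx v hv
      rw [intervalIntegral.integral_const_mul, hcomp] at hmonotone
      -- x * I ≤ x⁻¹ * F
      have := mul_le_mul_of_nonneg_left hmonotone (le_of_lt hx0)
      have h2 : x * (x⁻¹ * F) = F := by field_simp
      rw [h2] at this
      nlinarith [this]
  constructor
  · rw [le_div_iff₀ hIpos]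
    linarith
  · rw [div_le_iff₀ hIpos]
    linarith
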